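/- arXiv:0811.3712 — 4 statements merged into one kernel-verified Lean document; each statement's English description precedes it below -/
import Mathlib

section
/- Let X and Y be random variables such that P(X > x) ≤ f(x) for all x ≥ 0 with f nonnegative and non-increasing, and P(Y ≤ x) ≤ g(x) for all x ≥ 0 with g nonnegative and non-decreasing. Then for all x ≥ 0, P(X − Y ≥ x) ≤ inf_{z ≥ 0} [f(x + z) + g(z)]. -/
open MeasureTheory Set

/-- The `inf-sum` operation `(f ⊙ g)(x) = inf_{z ≥ 0} (f (x+z) + g z)`. -/
noncomputable def infSum (f g : ℝ → ℝ) (x : ℝ) : ℝ :=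
  sInf ((fun z => f (x + z) + g z) '' Set.Ici 0)

theorem stmt1 {Ω : Type*} [MeasurableSpace Ω] (μ : Measure Ω) [IsProbabilityMeasure μ]
    (X Y : Ω → ℝ) (f g : ℝ → ℝ)
    (hf0 : ∀ x, 0 ≤ x → 0 ≤ f x) (hfdec : ∀ x y, 0 ≤ x → x ≤ y → f y ≤ f x)
    (hg0 : ∀ x, 0 ≤ x → 0 ≤ g x) (hginc : ∀ x y, 0 ≤ x → x ≤ y → g x ≤ g y)
    (hXf : ∀ x, 0 ≤ x → μ {ω | x < X ω} ≤ ENNReal.ofReal (f x))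
    (hYg : ∀ x, 0 ≤ x → μ {ω | Y ω ≤ x} ≤ ENNReal.ofReal (g x)) :
    ∀ x, 0 ≤ x → μ {ω | x ≤ X ω - Y ω} ≤ ENNReal.ofReal (infSum f g x) := by
  intro x hx
  -- key pointwise bound for each z ≥ 0
  have key : ∀ z ∈ Set.Ici (0:ℝ), (μ {ω | x ≤ X ω - Y ω}).toReal ≤ f (x + z) + g z := by
    intro z hz
    have hz0 : (0:ℝ) ≤ z := hz
    have hsub : {ω | x ≤ X ω - Y ω} ⊆ {ω | x + z < X ω} ∪ {ω | Y ω ≤ z} := by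
      intro ω hω
      by_cases hY : Y ω ≤ z
      · exact Or.inr hY
      · left
        push_neg at hY
        have : x + Y ω ≤ X ω := by simp only [Set.mem_setOf_eq] at hω; linarith
        simp only [Set.mem_setOf_eq]; linarith
    have h1 := hXf (x + z) (by linarith)
    have h2 := hYg z hz0
    have hb : μ {ω | x ≤ X ω - Y ω} ≤ ENNReal.ofReal (f (x + z)) + ENNReal.ofReal (g z) :=
      le_trans (measure_mono hsub) (le_trans (measure_union_le _ _) (add_le_add h1 h2))
    have hb' : μ {ω | x ≤ X ω - Y ω} ≤ ENNReal.ofReal (f (x + z) + g z) := by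
      rwa [ENNReal.ofReal_add (hf0 _ (by linarith)) (hg0 _ hz0)]
    exact ENNReal.toReal_le_of_le_ofReal (by linarith [hf0 (x+z) (by linarith : (0:ℝ) ≤ x+z), hg0 z hz0]) hb'
  have hne : ((fun z => f (x + z) + g z) '' Set.Ici 0).Nonempty :=
    ⟨f (x + 0) + g 0, ⟨0, Set.mem_Ici.mpr le_rfl, rfl⟩⟩
  have hinf : (μ {ω | x ≤ X ω - Y ω}).toReal ≤ infSum f g x := by
    apply le_csInf hne
    rintro b ⟨z, hz, rfl⟩
    exact key z hz
  have hfin : μ {ω | x ≤ X ω - Y ω} ≠ ⊤ := measure_ne_top μ _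
  calc μ {ω | x ≤ X ω - Y ω} = ENNReal.ofReal (μ {ω | x ≤ X ω - Y ω}).toReal :=
        (ENNReal.ofReal_toReal hfin).symm
    _ ≤ ENNReal.ofReal (infSum f g x) := ENNReal.ofReal_le_ofReal hinf
end

section
/- Concatenation (two nodes, pathwise inequality): Let A¹ be the input to node 1, A¹* = A² its output which is input to node 2, and A²* the final output, with information functions H. For any x ≥ 0, β¹, β², define [β]ˣ(t) = max(β(t), x). Then for all t ≥ 0: sup_{0≤s≤t} [ (H(A¹) ⊗ [β¹ ⊗ β²]ˣ)(s) − H(A²*(s)) ] ≤ sup_{0≤u≤t} [ (H(A¹) ⊗ [β¹]ˣ)(u) − H(A¹*(u)) ] + sup_{0≤s≤t} [ (H(A²) ⊗ [β²]ˣ)(s) − H(A²*(s)) ]. -/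
open Set

/-- The `(min,+)` convolution `(f ⊗ g)(s) = inf_{0 ≤ u ≤ s} (f u + g (s - u))`. -/
noncomputable def minConv (f g : ℝ → ℝ) (s : ℝ) : ℝ :=
  sInf ((fun u => f u + g (s - u)) '' Set.Icc 0 s)

/-- The clipped curve `[β]ˣ(t) = max (β t) x`. -/
def clip (β : ℝ → ℝ) (x : ℝ) : ℝ → ℝ := fun t => max (β t) x

lemma minConv_le {f g : ℝ → ℝ} (hf : ∀ v, 0 ≤ f v) (hg : ∀ v, 0 ≤ g v)
    {s u : ℝ} (hu : u ∈ Set.Icc 0 s) : minConv f g s ≤ f u + g (s - u) := by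
  apply csInf_le
  · refine ⟨0, ?_⟩
    rintro y ⟨v, hv, rfl⟩
    exact add_nonneg (hf v) (hg _)
  · exact ⟨u, hu, rfl⟩

lemma le_minConv {f g : ℝ → ℝ} {s c : ℝ} (hs : 0 ≤ s)
    (h : ∀ u ∈ Set.Icc 0 s, c ≤ f u + g (s - u)) : c ≤ minConv f g s := by
  refine le_csInf ⟨f 0 + g s, ⟨0, ⟨le_rfl, hs⟩, by simp⟩⟩ ?_
  rintro y ⟨v, hv, rfl⟩; exact h v hv

/-- Concatenation, pathwise inequality for two nodes in tandem:
`A¹` is the input of node 1 with information `HA1`, its output (= input of node 2)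
has information `HA1s`, and the final output has information `HA2s`. -/
theorem stmt7 (HA1 HA1s HA2s : ℝ → ℝ) (β₁ β₂ : ℝ → ℝ) (x t : ℝ) (hx : 0 ≤ x) (ht : 0 ≤ t)
    (hHA1 : Monotone HA1) (hHA1s : Monotone HA1s) (hHA2s : Monotone HA2s)
    (hHA1n : ∀ s, 0 ≤ HA1 s) (hHA1sn : ∀ s, 0 ≤ HA1s s) (hHA2sn : ∀ s, 0 ≤ HA2s s)
    (hHA10 : HA1 0 = 0) (hHA1s0 : HA1s 0 = 0) (hHA2s0 : HA2s 0 = 0)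
    (hβ₁ : Monotone β₁) (hβ₂ : Monotone β₂)
    (hβ₁n : ∀ s, 0 ≤ β₁ s) (hβ₂n : ∀ s, 0 ≤ β₂ s) :
    sSup ((fun s => minConv HA1 (clip (minConv β₁ β₂) x) s - HA2s s) '' Set.Icc 0 t) ≤
      sSup ((fun u => minConv HA1 (clip β₁ x) u - HA1s u) '' Set.Icc 0 t) +
      sSup ((fun s => minConv HA1s (clip β₂ x) s - HA2s s) '' Set.Icc 0 t) := by
  have hc1n : ∀ v, 0 ≤ clip β₁ x v := fun v => hx.trans (le_max_right _ _)
  have hc2n : ∀ v, 0 ≤ clip β₂ x v := fun v => hx.trans (le_max_right _ _)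
  have hccn : ∀ v, 0 ≤ clip (minConv β₁ β₂) x v := fun v => hx.trans (le_max_right _ _)
  -- bddAbove of the two sup sets
  have hM1 : BddAbove ((fun u => minConv HA1 (clip β₁ x) u - HA1s u) '' Set.Icc 0 t) := by
    refine ⟨max (β₁ t) x, ?_⟩
    rintro y ⟨u, hu, rfl⟩
    have h0 : minConv HA1 (clip β₁ x) u ≤ HA1 0 + clip β₁ x (u - 0) :=
      minConv_le hHA1n hc1n ⟨le_rfl, hu.1⟩
    have hub : clip β₁ x (u - 0) ≤ max (β₁ t) x := by
      simp only [clip, sub_zero]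
      exact max_le_max (hβ₁ hu.2) le_rfl
    have := hHA1sn u
    simp only [hHA10, zero_add] at h0
    dsimp only
    linarith
  have hM2 : BddAbove ((fun s => minConv HA1s (clip β₂ x) s - HA2s s) '' Set.Icc 0 t) := by
    refine ⟨max (β₂ t) x, ?_⟩
    rintro y ⟨u, hu, rfl⟩
    have h0 : minConv HA1s (clip β₂ x) u ≤ HA1s 0 + clip β₂ x (u - 0) :=
      minConv_le hHA1sn hc2n ⟨le_rfl, hu.1⟩
    have hub : clip β₂ x (u - 0) ≤ max (β₂ t) x := by
      simp only [clip, sub_zero]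
      exact max_le_max (hβ₂ hu.2) le_rfl
    have := hHA2sn u
    simp only [hHA1s0, zero_add] at h0
    dsimp only
    linarith
  set S1 := sSup ((fun u => minConv HA1 (clip β₁ x) u - HA1s u) '' Set.Icc 0 t) with hS1
  set S2 := sSup ((fun s => minConv HA1s (clip β₂ x) s - HA2s s) '' Set.Icc 0 t) with hS2
  refine csSup_le ⟨_, ⟨0, ⟨le_rfl, ht⟩, rfl⟩⟩ ?_
  rintro y ⟨s, hs, rfl⟩
  dsimp only
  set A := minConv HA1 (clip (minConv β₁ β₂) x) s with hA
  -- key step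
  have key : A - S1 ≤ minConv HA1s (clip β₂ x) s := by
    apply le_minConv hs.1
    intro v hv
    have h1 : minConv HA1 (clip β₁ x) v - HA1s v ≤ S1 :=
      le_csSup hM1 ⟨v, ⟨hv.1, hv.2.trans hs.2⟩, rfl⟩
    have h2 : A - clip β₂ x (s - v) ≤ minConv HA1 (clip β₁ x) v := by
      apply le_minConv hv.1
      intro u hu
      have hA' : A ≤ HA1 u + clip (minConv β₁ β₂) x (s - u) :=
        minConv_le hHA1n hccn ⟨hu.1, hu.2.trans hv.2⟩
      have hclip : clip (minConv β₁ β₂) x (s - u) ≤ clip β₁ x (v - u) + clip β₂ x (s - v) := by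
        have hconv : minConv β₁ β₂ (s - u) ≤ β₁ (v - u) + β₂ ((s - u) - (v - u)) :=
          minConv_le hβ₁n hβ₂n ⟨sub_nonneg.2 hu.2, by linarith [hv.2]⟩
        rw [show (s - u) - (v - u) = s - v by ring] at hconv
      -- hconv now uses the Icc membership with both bounds; fix below
        simp only [clip]
        apply max_le
        · calc minConv β₁ β₂ (s - u) ≤ β₁ (v - u) + β₂ (s - v) := hconv
            _ ≤ max (β₁ (v - u)) x + max (β₂ (s - v)) x :=
              add_le_add (le_max_left _ _) (le_max_left _ _)
        · have h1' := le_max_right (β₁ (v - u)) x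
          have h2' := le_max_right (β₂ (s - v)) x
          linarith
      linarith
    linarith
  have h3 : minConv HA1s (clip β₂ x) s - HA2s s ≤ S2 := le_csSup hM2 ⟨s, hs, rfl⟩
  linarith
end

section
/- Output (pathwise inequality): Let H(A), H(A*) : [0,∞) → [0,∞) be nondecreasing with H(A*(t)) ≤ H(A(t)) for all t (output information never exceeds input information). For x ≥ 0, β, α nonnegative nondecreasing, write H(A(u,s)) = H(A(s)) − H(A(u)). Then for all t ≥ 0: sup_{0≤s≤t} sup_{0≤u≤s} [ H(A*(u,s)) − (α ⊘ β)(s−u) ] ≤ sup_{0≤s≤t} sup_{0≤u≤s} [ H(A(u,s)) − α(s−u) ] + sup_{0≤s≤t} [ (H(A) ⊗ [β]ˣ)(s) − H(A*(s)) ], where (α ⊘ β)(τ) = sup_{v≥0} (α(τ+v) − β(v)) and H(A*(u,s)) = H(A*(s)) − H(A*(u)). -/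
open Set

/-- The `(min,+)` deconvolution `(f ⊘ g)(τ) = sup_{v ≥ 0} (f (τ+v) - g v)`. -/
noncomputable def deconv (f g : ℝ → ℝ) (τ : ℝ) : ℝ :=
  sSup ((fun v => f (τ + v) - g v) '' Set.Ici 0)

/-- Output theorem, pathwise inequality. -/
theorem stmt10 (HA HAs : ℝ → ℝ) (α β : ℝ → ℝ) (x t : ℝ) (hx : 0 ≤ x) (ht : 0 ≤ t)
    (hHA : Monotone HA) (hHAs : Monotone HAs)
    (hHAn : ∀ s, 0 ≤ HA s) (hHAsn : ∀ s, 0 ≤ HAs s)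
    (hout : ∀ s, HAs s ≤ HA s)
    (hα : Monotone α) (hβ : Monotone β) (hαn : ∀ s, 0 ≤ α s) (hβn : ∀ s, 0 ≤ β s)
    (hdeconv : ∀ τ : ℝ, BddAbove ((fun v => α (τ + v) - β v) '' Set.Ici 0)) :
    sSup {y : ℝ | ∃ s ∈ Set.Icc 0 t, ∃ u ∈ Set.Icc (0:ℝ) s,
        y = (HAs s - HAs u) - deconv α β (s - u)} ≤
      sSup {y : ℝ | ∃ s ∈ Set.Icc 0 t, ∃ u ∈ Set.Icc (0:ℝ) s,
        y = (HA s - HA u) - α (s - u)} +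
      sSup ((fun s => minConv HA (clip β x) s - HAs s) '' Set.Icc 0 t) := by
  set B := sSup {y : ℝ | ∃ s ∈ Set.Icc 0 t, ∃ u ∈ Set.Icc (0:ℝ) s,
        y = (HA s - HA u) - α (s - u)} with hB
  set C := sSup ((fun s => minConv HA (clip β x) s - HAs s) '' Set.Icc 0 t) with hC
  have hBbdd : BddAbove {y : ℝ | ∃ s ∈ Set.Icc 0 t, ∃ u ∈ Set.Icc (0:ℝ) s,
        y = (HA s - HA u) - α (s - u)} := by
    refine ⟨HA t, ?_⟩
    rintro y ⟨s, hs, u, hu, rfl⟩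
    have := hHA hs.2
    have := hHAn u
    have := hαn (s - u)
    linarith
  have hCbdd : BddAbove ((fun s => minConv HA (clip β x) s - HAs s) '' Set.Icc 0 t) := by
    refine ⟨HA 0 + max (β t) x, ?_⟩
    rintro y ⟨s, hs, rfl⟩
    have h1 : minConv HA (clip β x) s ≤ HA 0 + clip β x (s - 0) := by
      apply csInf_le
      · refine ⟨0, ?_⟩
        rintro z ⟨w, hw, rfl⟩
        have := hHAn w
        have := hβn (s - w)
        have : (0:ℝ) ≤ clip β x (s - w) := le_trans (hβn _) (le_max_left _ _)
        simp only []
        linarith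
      · exact ⟨0, ⟨le_refl 0, hs.1⟩, rfl⟩
    have h2 : clip β x (s - 0) ≤ max (β t) x := by
      simp only [clip, sub_zero]
      exact max_le_max (hβ hs.2) (le_refl x)
    have := hHAsn s
    simp only []
    linarith
  apply csSup_le
  · exact ⟨(HAs 0 - HAs 0) - deconv α β (0 - 0), 0, ⟨le_refl 0, ht⟩, 0,
      ⟨le_refl 0, le_refl 0⟩, rfl⟩
  rintro y ⟨s, hs, u, hu, rfl⟩
  have hut : u ∈ Set.Icc (0:ℝ) t := ⟨hu.1, hu.2.trans hs.2⟩
  have h1 : minConv HA (clip β x) u - HAs u ≤ C :=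
    le_csSup hCbdd ⟨u, hut, rfl⟩
  have h2 : HAs s - deconv α β (s - u) - B ≤ minConv HA (clip β x) u := by
    refine le_csInf ⟨_, ⟨0, ⟨le_refl 0, hu.1⟩, rfl⟩⟩ ?_
    rintro b ⟨w, hw, rfl⟩
    have hws : w ∈ Set.Icc (0:ℝ) s := ⟨hw.1, hw.2.trans hu.2⟩
    have hBge : HA s - HA w - α (s - w) ≤ B :=
      le_csSup hBbdd ⟨s, hs, w, hws, rfl⟩
    have hdge : α (s - w) - β (u - w) ≤ deconv α β (s - u) := by
      have : α ((s - u) + (u - w)) - β (u - w) ≤ deconv α β (s - u) :=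
        le_csSup (hdeconv (s - u)) ⟨u - w, by simpa using hw.2, rfl⟩
      have he : (s - u) + (u - w) = s - w := by ring
      rwa [he] at this
    have hclip : β (u - w) ≤ clip β x (u - w) := le_max_left _ _
    have hos : HAs s ≤ HA s := hout s
    simp only []
    linarith
  linarith
end

section
/- Pathwise backlog decomposition: For all t ≥ 0 and x ≥ 0, H(A(t)) − H(A*(t)) ≤ sup_{0≤s≤t} [H(A(s,t)) − α(t−s)] + (α ⊘ β)(0) + sup_{0≤s≤t} [ (H(A) ⊗ [β]ˣ)(s) − H(A*(s)) ]. -/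
open Set

/-- Pathwise backlog decomposition. -/
theorem stmt13 (HA HAs : ℝ → ℝ) (α β : ℝ → ℝ) (x t : ℝ) (hx : 0 ≤ x) (ht : 0 ≤ t)
    (hHA : Monotone HA) (hHAs : Monotone HAs)
    (hHAn : ∀ s, 0 ≤ HA s) (hHAsn : ∀ s, 0 ≤ HAs s)
    (hα : Monotone α) (hβ : Monotone β) (hαn : ∀ s, 0 ≤ α s) (hβn : ∀ s, 0 ≤ β s)
    (hdeconv : BddAbove ((fun v => α (0 + v) - β v) '' Set.Ici 0)) :
    HA t - HAs t ≤
      sSup ((fun s => (HA t - HA s) - α (t - s)) '' Set.Icc 0 t) + deconv α β 0 +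
      sSup ((fun s => minConv HA (clip β x) s - HAs s) '' Set.Icc 0 t) := by
  set S1 := (fun s => (HA t - HA s) - α (t - s)) '' Set.Icc 0 t with hS1
  set S3 := (fun s => minConv HA (clip β x) s - HAs s) '' Set.Icc 0 t with hS3
  have hbdd1 : BddAbove S1 := by
    refine ⟨HA t - HA 0, ?_⟩
    rintro _ ⟨s, hs, rfl⟩
    have := hHA hs.1
    have := hαn (t - s)
    dsimp; linarith
  have hbdd3 : BddAbove S3 := by
    refine ⟨HA 0 + max (β t) x, ?_⟩
    rintro _ ⟨s, hs, rfl⟩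
    dsimp
    have h1 : minConv HA (clip β x) s ≤ HA 0 + clip β x (s - 0) := by
      apply csInf_le
      · refine ⟨0, ?_⟩
        rintro _ ⟨u, hu, rfl⟩
        have := hHAn u
        have : (0:ℝ) ≤ clip β x (s - u) := le_trans (hβn _) (le_max_left _ _)
        dsimp; linarith [hHAn u]
      · exact ⟨0, ⟨le_refl 0, hs.1⟩, rfl⟩
    have h2 : clip β x (s - 0) ≤ max (β t) x := by
      simp only [clip, sub_zero]
      exact max_le_max (hβ hs.2) le_rfl
    have := hHAsn s
    linarith
  -- second bracket
  have hstep2 : minConv HA (clip β x) t - HAs t ≤ sSup S3 := by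
    apply le_csSup hbdd3
    exact ⟨t, ⟨ht, le_rfl⟩, rfl⟩
  -- first bracket
  have hstep1 : HA t - minConv HA (clip β x) t ≤ sSup S1 + deconv α β 0 := by
    have h : HA t - (sSup S1 + deconv α β 0) ≤ minConv HA (clip β x) t := by
      unfold minConv
      refine le_csInf ⟨HA 0 + clip β x (t - 0), ⟨0, ⟨le_rfl, ht⟩, rfl⟩⟩ ?_
      rintro _ ⟨u, hu, rfl⟩
      dsimp
      have h1 : (HA t - HA u) - α (t - u) ≤ sSup S1 :=
        le_csSup hbdd1 ⟨u, hu, rfl⟩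
      have h2 : α (t - u) - β (t - u) ≤ deconv α β 0 := by
        apply le_csSup hdeconv
        exact ⟨t - u, by simp [hu.2], by simp⟩
      have h3 : β (t - u) ≤ clip β x (t - u) := le_max_left _ _
      linarith
    linarith
  linarith
end
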